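/- For p ≥ 2, the restriction of the simplicial boundary map d_p^C of X(Z_2^n) (with F_2 coefficients) to the subspace D_p spanned by the class-sums [σ] equals the map d_p^D; i.e., for every p-simplex σ = {α_1,...,α_{p+1}}, d_p^C(Σ_{σ'~σ} σ') = [(σ \ {α_1}) + α_1] + Σ_{i=1}^{p+1} [σ \ {α_i}]. -/

import Mathlib

open Finset

attribute [local instance] Classical.propDecidable

abbrev V (n : ℕ) : Type := Fin n → ZMod 2

def LinIndep {n : ℕ} (s : Finset (V n)) : Prop :=
  LinearIndependent (ZMod 2) (fun x : (s : Set (V n)) => (x : V n))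

def IsSimplex (n p : ℕ) (σ : Finset (V n)) : Prop :=
  σ.card = p + 1 ∧ LinIndep σ

def shift {n : ℕ} (σ : Finset (V n)) (α : V n) : Finset (V n) :=
  σ.image (· + α)

def SimpRel {n : ℕ} (σ σ' : Finset (V n)) : Prop :=
  σ = σ' ∨ ∃ α : V n, σ ∩ σ' = {α} ∧ shift (σ \ {α}) α = σ' \ {α}

/-- The class sum `[σ] = ∑_{σ' ~ σ} σ'`, a simplicial chain over `F_2`. -/
noncomputable def classSum {n : ℕ} (σ : Finset (V n)) : Finset (V n) →₀ ZMod 2 :=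
  ∑ σ' ∈ Finset.univ.filter (fun σ' => SimpRel σ σ'), Finsupp.single σ' 1

/-- The value `d_p^D([σ])` computed using the chosen element `α ∈ σ`:
`[(σ \ {α}) + α] + ∑_{β ∈ σ} [σ \ {β}]`. -/
noncomputable def dDat {n : ℕ} (σ : Finset (V n)) (α : V n) : Finset (V n) →₀ ZMod 2 :=
  classSum (shift (σ \ {α}) α) + ∑ β ∈ σ, classSum (σ \ {β})

/-- The simplicial boundary map over `F_2`: a single simplex is sent to the sum of its
codimension-one faces. -/
noncomputable def dC (n : ℕ) :
    (Finset (V n) →₀ ZMod 2) →ₗ[ZMod 2] (Finset (V n) →₀ ZMod 2) :=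
  Finsupp.lsum (ZMod 2) fun τ =>
    LinearMap.toSpanSingleton (ZMod 2) _
      (∑ x ∈ τ, Finsupp.single (τ \ {x}) (1 : ZMod 2))


namespace S6
variable {n : ℕ}

lemma add_self_eq (x : V n) : x + x = 0 := by
  funext i
  have h : ∀ a : ZMod 2, a + a = 0 := by decide
  exact h (x i)

lemma sum_ne_zero {s : Finset (V n)} (h : LinIndep s)
    {t : Finset (V n)} (hts : t ⊆ s) (hne : t.Nonempty) : ∑ x ∈ t, x ≠ 0 := by
  intro hzero
  rw [LinIndep, linearIndependent_iff'] at h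
  obtain ⟨a, ha⟩ := hne
  classical
  have key : ∑ i ∈ t.attach.image (fun x : {y // y ∈ t} => (⟨x.1, hts x.2⟩ : (s : Set (V n)))),
      (1 : ZMod 2) • (i : V n) = 0 := by
    rw [Finset.sum_image (by
      intro x hx y hy hxy
      exact Subtype.ext (congrArg (fun z : (s : Set (V n)) => (z : V n)) hxy))]
    simp only [one_smul]
    rw [Finset.sum_attach t (fun x => x)]
    exact hzero
  have := h _ (fun _ => 1) key ⟨a, hts ha⟩ (by
    simp only [Finset.mem_image, Finset.mem_attach]
    exact ⟨⟨a, ha⟩, trivial, rfl⟩)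
  exact one_ne_zero this

lemma zero_not_mem {s : Finset (V n)} (h : LinIndep s) : (0 : V n) ∉ s := by
  intro h0
  exact sum_ne_zero h (singleton_subset_iff.2 h0) ⟨0, mem_singleton_self 0⟩ (by simp)

lemma sumfree {s : Finset (V n)} (h : LinIndep s) {a b : V n} (ha : a ∈ s) (hb : b ∈ s)
    (hab : a ≠ b) : a + b ∉ s := by
  intro hc
  by_cases h1 : a + b = a
  · exact zero_not_mem h (add_eq_left.1 h1 ▸ hb)
  by_cases h2 : a + b = b
  · exact zero_not_mem h (add_eq_right.1 h2 ▸ ha)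
  refine sum_ne_zero h (t := {a, b, a + b}) ?_ ⟨a, by simp⟩ ?_
  · intro x hx
    simp only [mem_insert, mem_singleton] at hx
    rcases hx with rfl | rfl | rfl <;> assumption
  · rw [Finset.sum_insert (by simp [hab, Ne.symm h1]),
      Finset.sum_insert (by simp [Ne.symm h2]), Finset.sum_singleton]
    have : a + (b + (a + b)) = (a + a) + (b + b) := by abel
    rw [this, add_self_eq, add_self_eq, add_zero]

lemma four {s : Finset (V n)} (h : LinIndep s) {a b c d : V n}
    (ha : a ∈ s) (hb : b ∈ s) (hc : c ∈ s) (hd : d ∈ s)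
    (hab : a ≠ b) (hac : a ≠ c) (had : a ≠ d) (hbc : b ≠ c) (hbd : b ≠ d) (hcd : c ≠ d) :
    a + b + c + d ≠ 0 := by
  intro h0
  refine sum_ne_zero h (t := {a, b, c, d}) ?_ ⟨a, by simp⟩ ?_
  · intro x hx
    simp only [mem_insert, mem_singleton] at hx
    rcases hx with rfl | rfl | rfl | rfl <;> assumption
  · rw [Finset.sum_insert (by simp [hab, hac, had]),
      Finset.sum_insert (by simp [hbc, hbd]), Finset.sum_insert (by simp [hcd]),
      Finset.sum_singleton]
    rw [show a + (b + (c + d)) = a + b + c + d by abel]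
    exact h0

lemma add_eq_iff {x y a : V n} : x + a = y ↔ x = y + a := by
  constructor
  · rintro rfl; rw [add_assoc, add_self_eq, add_zero]
  · rintro rfl; rw [add_assoc, add_self_eq, add_zero]

/-- The reflection of `s` at `γ`. -/
def reflAt (s : Finset (V n)) (γ : V n) : Finset (V n) := insert γ (shift (s \ {γ}) γ)

lemma not_mem_shift {s : Finset (V n)} (h0 : (0 : V n) ∉ s) (γ : V n) : γ ∉ shift s γ := by
  intro h
  obtain ⟨y, hy, hyγ⟩ := Finset.mem_image.1 h
  rw [add_eq_right] at hyγ
  exact h0 (hyγ ▸ hy)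

lemma reflAt_sdiff {s : Finset (V n)} (h0 : (0 : V n) ∉ s) (γ : V n) :
    reflAt s γ \ {γ} = shift (s \ {γ}) γ := by
  have hγ : γ ∉ shift (s \ {γ}) γ := not_mem_shift (fun h => h0 (mem_sdiff.1 h).1) γ
  rw [reflAt, Finset.insert_sdiff_of_mem _ (mem_singleton_self γ),
    Finset.sdiff_singleton_eq_erase, Finset.erase_eq_of_notMem hγ]

lemma inter_reflAt {s : Finset (V n)} (h0 : (0 : V n) ∉ s)
    (hsf : ∀ a ∈ s, ∀ b ∈ s, a ≠ b → a + b ∉ s) {γ : V n} (hγ : γ ∈ s) :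
    s ∩ reflAt s γ = {γ} := by
  ext x
  simp only [mem_inter, reflAt, mem_insert, mem_singleton, shift, Finset.mem_image,
    mem_sdiff]
  constructor
  · rintro ⟨hxs, rfl | ⟨y, ⟨hy, hyγ⟩, rfl⟩⟩
    · rfl
    · exact absurd hxs (hsf y hy γ hγ (by simpa using hyγ))
  · rintro rfl
    exact ⟨hγ, Or.inl rfl⟩

lemma reflAt_ne {s : Finset (V n)} (h0 : (0 : V n) ∉ s)
    (hsf : ∀ a ∈ s, ∀ b ∈ s, a ≠ b → a + b ∉ s) {γ : V n} (hγ : γ ∈ s)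
    (hcard : 2 ≤ s.card) : reflAt s γ ≠ s := by
  intro heq
  obtain ⟨y, hy, hyγ⟩ := Finset.exists_mem_ne (s := s) (by omega) γ
  have : y + γ ∈ reflAt s γ := by
    apply Finset.mem_insert_of_mem
    exact Finset.mem_image.2 ⟨y, mem_sdiff.2 ⟨hy, by simpa using hyγ⟩, rfl⟩
  rw [heq] at this
  exact hsf y hy γ hγ hyγ this

lemma simpRel_iff {s : Finset (V n)} (h0 : (0 : V n) ∉ s)
    (hsf : ∀ a ∈ s, ∀ b ∈ s, a ≠ b → a + b ∉ s) (σ' : Finset (V n)) :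
    SimpRel s σ' ↔ σ' = s ∨ ∃ γ ∈ s, σ' = reflAt s γ := by
  constructor
  · rintro (rfl | ⟨γ, hint, hsh⟩)
    · exact Or.inl rfl
    · have hγs : γ ∈ s := by
        have : γ ∈ s ∩ σ' := hint ▸ mem_singleton_self γ
        exact (mem_inter.1 this).1
      have hγσ' : γ ∈ σ' := by
        have : γ ∈ s ∩ σ' := hint ▸ mem_singleton_self γ
        exact (mem_inter.1 this).2
      refine Or.inr ⟨γ, hγs, ?_⟩
      rw [reflAt, hsh, Finset.sdiff_singleton_eq_erase, Finset.insert_erase hγσ']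
  · rintro (rfl | ⟨γ, hγ, rfl⟩)
    · exact Or.inl rfl
    · exact Or.inr ⟨γ, inter_reflAt h0 hsf hγ, (reflAt_sdiff h0 γ).symm⟩

lemma classSum_eq {s : Finset (V n)} (h0 : (0 : V n) ∉ s)
    (hsf : ∀ a ∈ s, ∀ b ∈ s, a ≠ b → a + b ∉ s) (hcard : 2 ≤ s.card) :
    classSum s = Finsupp.single s 1 + ∑ γ ∈ s, Finsupp.single (reflAt s γ) 1 := by
  have hset : Finset.univ.filter (fun σ' => SimpRel s σ')
      = insert s (s.image (reflAt s)) := by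
    ext τ
    simp only [Finset.mem_filter, Finset.mem_univ, true_and, mem_insert, Finset.mem_image,
      simpRel_iff h0 hsf]
    constructor
    · rintro (rfl | ⟨γ, hγ, rfl⟩)
      · exact Or.inl rfl
      · exact Or.inr ⟨γ, hγ, rfl⟩
    · rintro (rfl | ⟨γ, hγ, rfl⟩)
      · exact Or.inl rfl
      · exact Or.inr ⟨γ, hγ, rfl⟩
  rw [classSum, hset, Finset.sum_insert, Finset.sum_image]
  · intro x hx y hy hxy
    have : y ∈ s ∩ reflAt s x := mem_inter.2 ⟨hy, hxy ▸ mem_insert_self y _⟩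
    rw [inter_reflAt h0 hsf hx] at this
    exact (mem_singleton.1 this).symm
  · intro hmem
    obtain ⟨γ, hγ, heq⟩ := Finset.mem_image.1 hmem
    exact reflAt_ne h0 hsf hγ hcard heq

lemma dC_single (τ : Finset (V n)) :
    dC n (Finsupp.single τ 1) = ∑ x ∈ τ, Finsupp.single (τ \ {x}) (1 : ZMod 2) := by
  rw [dC, Finsupp.lsum_single, LinearMap.toSpanSingleton_apply, one_smul]

lemma add_ne_add {a b c : V n} (h : a ≠ b) : a + c ≠ b + c :=
  fun heq => h (add_left_injective c heq)

/-- Removing the face `y + γ` from `reflAt s γ` yields `reflAt (s \ {y}) γ`. -/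
lemma reflAt_remove {s : Finset (V n)} (h0 : (0 : V n) ∉ s) {γ y : V n}
    (hy : y ∈ s \ {γ}) : reflAt s γ \ {y + γ} = reflAt (s \ {y}) γ := by
  obtain ⟨hys, hyγ'⟩ := mem_sdiff.1 hy
  have hy0 : y ≠ 0 := fun h => h0 (h ▸ hys)
  ext x
  simp only [reflAt, shift, mem_sdiff, mem_insert, Finset.mem_image, mem_singleton]
  constructor
  · rintro ⟨rfl | ⟨z, ⟨⟨hz, hzγ⟩, rfl⟩⟩, hx2⟩
    · exact Or.inl rfl
    · exact Or.inr ⟨z, ⟨⟨hz, fun h => hx2 (by rw [h])⟩, hzγ⟩, rfl⟩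
  · rintro (rfl | ⟨z, ⟨⟨hz, hzy⟩, hzγ⟩, rfl⟩)
    · refine ⟨Or.inl rfl, fun h => ?_⟩
      rw [eq_comm, add_eq_right] at h
      exact hy0 h
    · exact ⟨Or.inr ⟨z, ⟨⟨hz, hzγ⟩, rfl⟩⟩, add_ne_add hzy⟩

/-- Key identity: reflecting the shifted set at `γ + α` gives the shift of `s \ {γ}`. -/
lemma reflAt_shift {s : Finset (V n)} {α γ : V n} (hα : α ∈ s) (hγα : γ ≠ α) :
    reflAt (shift (s \ {α}) α) (γ + α) = shift (s \ {γ}) γ := by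
  have h1 : Finset.image (· + α) (s \ {α}) \ {γ + α}
      = Finset.image (· + α) ((s \ {α}) \ {γ}) := by
    rw [show ({γ + α} : Finset (V n)) = Finset.image (· + α) {γ} from by simp,
      ← Finset.image_sdiff _ _ (add_left_injective α)]
  have h2 : Finset.image (· + (γ + α)) (Finset.image (· + α) ((s \ {α}) \ {γ}))
      = Finset.image (· + γ) ((s \ {α}) \ {γ}) := by
    rw [Finset.image_image]
    apply Finset.image_congr
    intro x _
    show x + α + (γ + α) = x + γ
    rw [show x + α + (γ + α) = x + γ + (α + α) from by abel, add_self_eq, add_zero]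
  have hαγ : α ∈ s \ {γ} := mem_sdiff.2 ⟨hα, by simpa using hγα.symm⟩
  have h3 : insert α ((s \ {γ}) \ {α}) = s \ {γ} := by
    rw [Finset.sdiff_singleton_eq_erase, Finset.insert_erase hαγ]
  simp only [reflAt, shift]
  rw [h1, h2, ← h3, Finset.image_insert, add_comm γ α]
  congr 1
  rw [sdiff_sdiff_comm]

/-- Boundary of a reflected simplex. -/
lemma F_reflAt {s : Finset (V n)} (h0 : (0 : V n) ∉ s) {γ : V n} (hγ : γ ∈ s) :
    ∑ x ∈ reflAt s γ, Finsupp.single (reflAt s γ \ {x}) (1 : ZMod 2)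
      = Finsupp.single (shift (s \ {γ}) γ) 1
        + ∑ y ∈ s \ {γ}, Finsupp.single (reflAt (s \ {y}) γ) 1 := by
  have hγsh : γ ∉ shift (s \ {γ}) γ := not_mem_shift (fun h => h0 (mem_sdiff.1 h).1) γ
  rw [show (reflAt s γ : Finset (V n)) = insert γ (shift (s \ {γ}) γ) from rfl,
    Finset.sum_insert hγsh]
  congr 1
  · rw [show insert γ (shift (s \ {γ}) γ) = reflAt s γ from rfl, reflAt_sdiff h0]
  · rw [show (shift (s \ {γ}) γ : Finset (V n)) = Finset.image (· + γ) (s \ {γ}) from rfl,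
      Finset.sum_image (fun x _ y _ h => add_left_injective γ h)]
    apply Finset.sum_congr rfl
    intro y hy
    exact congrArg (fun t => Finsupp.single t (1 : ZMod 2)) (reflAt_remove h0 hy)

end S6

/-- for `p ≥ 2`, the simplicial boundary of the class sum `[σ]` equals
`d_p^D([σ]) = [(σ \ {α}) + α] + ∑_i [σ \ {α_i}]`. -/
theorem stmt6 (n p : ℕ) (hp : 2 ≤ p) (σ : Finset (V n)) (hσ : IsSimplex n p σ)
    (α : V n) (hα : α ∈ σ) :
    dC n (classSum σ) = dDat σ α := by
  obtain ⟨hcard, hli⟩ := hσ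
  have h0 : (0 : V n) ∉ σ := S6.zero_not_mem hli
  have hsf : ∀ a ∈ σ, ∀ b ∈ σ, a ≠ b → a + b ∉ σ :=
    fun a ha b hb hab => S6.sumfree hli ha hb hab
  have hc2 : 2 ≤ σ.card := by omega
  have h0f : ∀ β, (0 : V n) ∉ σ \ {β} := fun β h => h0 (mem_sdiff.1 h).1
  have hsff : ∀ β, ∀ a ∈ σ \ {β}, ∀ b ∈ σ \ {β}, a ≠ b → a + b ∉ σ \ {β} := by
    intro β a ha b hb hab h
    exact hsf a (mem_sdiff.1 ha).1 b (mem_sdiff.1 hb).1 hab (mem_sdiff.1 h).1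
  have hcf : ∀ β ∈ σ, 2 ≤ (σ \ {β}).card := by
    intro β hβ
    rw [Finset.card_sdiff_of_subset (singleton_subset_iff.2 hβ), Finset.card_singleton, hcard]
    omega
  set T := shift (σ \ {α}) α with hT
  have hTimage : T = Finset.image (· + α) (σ \ {α}) := rfl
  have hcT : 2 ≤ T.card := by
    rw [hTimage, Finset.card_image_of_injective _ (add_left_injective α),
      Finset.card_sdiff_of_subset (singleton_subset_iff.2 hα), Finset.card_singleton, hcard]
    omega
  have h0T : (0 : V n) ∉ T := by
    intro h
    obtain ⟨y, hy, hy0⟩ := Finset.mem_image.1 h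
    have : y = α := by
      have h2 := congrArg (· + α) hy0
      simpa [add_assoc, S6.add_self_eq] using h2
    exact (mem_sdiff.1 hy).2 (by simp [this])
  have hsfT : ∀ a ∈ T, ∀ b ∈ T, a ≠ b → a + b ∉ T := by
    intro a ha b hb hab hmem
    obtain ⟨y, hy, rfl⟩ := Finset.mem_image.1 ha
    obtain ⟨z, hz, rfl⟩ := Finset.mem_image.1 hb
    obtain ⟨w, hw, hwm⟩ := Finset.mem_image.1 hmem
    obtain ⟨hyσ, hyα'⟩ := mem_sdiff.1 hy
    obtain ⟨hzσ, hzα'⟩ := mem_sdiff.1 hz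
    obtain ⟨hwσ, hwα'⟩ := mem_sdiff.1 hw
    have hyα : y ≠ α := by simpa using hyα'
    have hzα : z ≠ α := by simpa using hzα'
    have hwα : w ≠ α := by simpa using hwα'
    have hyz : y ≠ z := fun h => hab (by rw [h])
    have hwm' : w + α = y + z := by
      rw [hwm, show y + α + (z + α) = y + z + (α + α) from by abel, S6.add_self_eq,
        add_zero]
    by_cases hwy : w = y
    · subst hwy
      exact hzα (add_left_cancel hwm').symm
    · by_cases hwz : w = z
      · subst hwz
        have h5 : w + α = w + y := by rw [hwm', add_comm]
        exact hyα (add_left_cancel h5).symm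
      · refine S6.four hli hyσ hzσ hwσ hα hyz (Ne.symm hwy) hyα (Ne.symm hwz) hzα hwα ?_
        rw [show y + z + w + α = (y + z) + (w + α) from by abel, ← hwm', S6.add_self_eq]
  -- expand both sides
  rw [S6.classSum_eq h0 hsf hc2, map_add, map_sum, S6.dC_single]
  have hL2 : ∑ γ ∈ σ, dC n (Finsupp.single (S6.reflAt σ γ) 1)
      = ∑ γ ∈ σ, (Finsupp.single (shift (σ \ {γ}) γ) 1
          + ∑ y ∈ σ \ {γ}, Finsupp.single (S6.reflAt (σ \ {y}) γ) 1) := by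
    apply Finset.sum_congr rfl
    intro γ hγ
    rw [S6.dC_single, S6.F_reflAt h0 hγ]
  rw [hL2, dDat, ← hT, S6.classSum_eq h0T hsfT hcT]
  have hR2 : ∑ β ∈ σ, classSum (σ \ {β})
      = ∑ β ∈ σ, (Finsupp.single (σ \ {β}) 1
          + ∑ γ ∈ σ \ {β}, Finsupp.single (S6.reflAt (σ \ {β}) γ) 1) := by
    apply Finset.sum_congr rfl
    intro β hβ
    rw [S6.classSum_eq (h0f β) (hsff β) (hcf β hβ)]
  rw [hR2, Finset.sum_add_distrib, Finset.sum_add_distrib]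
  have key1 : ∑ γ ∈ σ, Finsupp.single (shift (σ \ {γ}) γ) (1 : ZMod 2)
      = Finsupp.single T 1 + ∑ δ ∈ T, Finsupp.single (S6.reflAt T δ) 1 := by
    rw [Finset.sum_eq_sum_sdiff_singleton_add hα]
    have e1 : ∑ δ ∈ T, Finsupp.single (S6.reflAt T δ) (1 : ZMod 2)
        = ∑ γ ∈ σ \ {α}, Finsupp.single (S6.reflAt T (γ + α)) 1 := by
      rw [hTimage, Finset.sum_image (fun x _ y _ h => add_left_injective α h)]
    have e2 : ∑ γ ∈ σ \ {α}, Finsupp.single (S6.reflAt T (γ + α)) (1 : ZMod 2)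
        = ∑ γ ∈ σ \ {α}, Finsupp.single (shift (σ \ {γ}) γ) 1 := by
      apply Finset.sum_congr rfl
      intro γ hγ
      rw [hT, S6.reflAt_shift hα (by simpa using (mem_sdiff.1 hγ).2)]
    rw [e1, e2]
    abel
  have key2 : ∑ γ ∈ σ, ∑ y ∈ σ \ {γ}, Finsupp.single (S6.reflAt (σ \ {y}) γ) (1 : ZMod 2)
      = ∑ β ∈ σ, ∑ γ ∈ σ \ {β}, Finsupp.single (S6.reflAt (σ \ {β}) γ) 1 := by
    apply Finset.sum_comm'
    intro x y
    simp only [mem_sdiff, mem_singleton]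
    constructor
    · rintro ⟨h1, h2, h3⟩
      exact ⟨⟨h1, fun h => h3 h.symm⟩, h2⟩
    · rintro ⟨⟨h1, h3⟩, h2⟩
      exact ⟨h1, h2, fun h => h3 h.symm⟩
  rw [key1, key2]
  abel
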